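/- Let $M_p$ be a sequence of positive numbers with $M_0=1$ satisfying $M_p^2\le M_{p-1}M_{p+1}$ (log-convexity) and $M_p/C^p\to\infty$ for every $C>0$, and let $M(\rho)=\sup_{p\in\mathbb{N}} \ln_+(\rho^p/M_p)$ be its associated function. Let $B$ be a family of continuous functions on $\mathbb{R}^d$. Then the following are equivalent: (i) for every $h>0$ there exists $C>0$ such that $|f(x)|\le C e^{M(h|x|)}$ for all $x\in\mathbb{R}^d$ and $f\in B$; (ii) there exist a positive sequence $(r_p)$ monotonically increasing to infinity and $C>0$ such that $|f(x)|\le C e^{N_{r_p}(|x|)}$ for all $x\in\mathbb{R}^d$ and $f\in B$, where $N_{r_p}(\rho)=\sup_{p\in\mathbb{N}}\ln_+\big(\rho^p/(M_p\prod_{j=1}^p r_j)\big)$. -/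

import Mathlib

open Filter Finset

/-- The associated function `M(ρ) = sup_p ln₊(ρ^p / M_p)`. -/
noncomputable def assocFn (M : ℕ → ℝ) (ρ : ℝ) : ℝ :=
  ⨆ p : ℕ, max (Real.log (ρ ^ p / M p)) 0

/-- abbreviation for the individual terms -/
noncomputable def tm (M : ℕ → ℝ) (σ : ℝ) (p : ℕ) : ℝ := max (Real.log (σ ^ p / M p)) 0

lemma assocFn_def (M : ℕ → ℝ) (σ : ℝ) : assocFn M σ = ⨆ p, tm M σ p := rfl

lemma tm_nonneg (M : ℕ → ℝ) (σ : ℝ) (p : ℕ) : 0 ≤ tm M σ p := le_max_right _ _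

lemma lnplus_mono {x y : ℝ} (hx : 0 ≤ x) (hxy : x ≤ y) :
    max (Real.log x) 0 ≤ max (Real.log y) 0 := by
  rcases eq_or_lt_of_le hx with h | h
  · simp [← h, Real.log_zero]
  · exact max_le_max (Real.log_le_log h hxy) le_rfl

lemma tm_mono {M : ℕ → ℝ} (hMpos : ∀ p, 0 < M p) {σ σ' : ℝ} (h0 : 0 ≤ σ) (h : σ ≤ σ')
    (p : ℕ) : tm M σ p ≤ tm M σ' p :=
  lnplus_mono (div_nonneg (pow_nonneg h0 p) (hMpos p).le)
    ((div_le_div_iff_of_pos_right (hMpos p)).2 (pow_le_pow_left₀ h0 h p))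

lemma tm_le_tm {M M' : ℕ → ℝ} (hMpos : ∀ p, 0 < M p) (hle : ∀ p, M p ≤ M' p) {σ : ℝ}
    (h0 : 0 ≤ σ) (p : ℕ) : tm M' σ p ≤ tm M σ p :=
  lnplus_mono (div_nonneg (pow_nonneg h0 p) ((hMpos p).trans_le (hle p)).le)
    (div_le_div_of_nonneg_left (pow_nonneg h0 p) (hMpos p) (hle p))

lemma tm_tail {M : ℕ → ℝ} (hMpos : ∀ p, 0 < M p) {σ : ℝ} (h0 : 0 ≤ σ) {p : ℕ}
    (h : σ ^ p ≤ M p) : tm M σ p = 0 := by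
  have : Real.log (σ ^ p / M p) ≤ 0 :=
    Real.log_nonpos (div_nonneg (pow_nonneg h0 p) (hMpos p).le) ((div_le_one (hMpos p)).2 h)
  simp [tm, max_eq_right this]

/-- L1 -/
lemma exists_tail {M : ℕ → ℝ}
    (hMgrow : ∀ C : ℝ, 0 < C → Tendsto (fun p : ℕ => M p / C ^ p) atTop atTop)
    (ρbar : ℝ) : ∃ P : ℕ, ∀ p, P ≤ p → ∀ σ : ℝ, 0 ≤ σ → σ ≤ ρbar → σ ^ p ≤ M p := by
  have hC : (0:ℝ) < max ρbar 1 := lt_of_lt_of_le one_pos (le_max_right _ _)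
  obtain ⟨P, hP⟩ := (tendsto_atTop.1 (hMgrow _ hC) 1).exists_forall_of_atTop
  refine ⟨P, fun p hp σ hσ0 hσ => ?_⟩
  have h1 : (1:ℝ) ≤ M p / (max ρbar 1) ^ p := hP p hp
  have h2 : (max ρbar 1) ^ p ≤ M p := (one_le_div (by positivity)).1 h1
  exact le_trans (pow_le_pow_left₀ hσ0 (le_trans hσ (le_max_left _ _)) p) h2

/-- L2: attainment of the sup over a finite range -/
lemma exists_argmax {M : ℕ → ℝ} (hMpos : ∀ p, 0 < M p) {σ : ℝ} (h0 : 0 ≤ σ) {P : ℕ}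
    (hP : ∀ p, P ≤ p → σ ^ p ≤ M p) :
    ∃ q, q ≤ P ∧ ∀ p, tm M σ p ≤ tm M σ q := by
  obtain ⟨q, hq, hmax⟩ := Finset.exists_max_image (Finset.range (P + 1)) (tm M σ)
    ⟨0, by simp⟩
  refine ⟨q, by simpa using Nat.lt_succ_iff.1 (Finset.mem_range.1 hq), fun p => ?_⟩
  by_cases hp : p ≤ P
  · exact hmax p (Finset.mem_range.2 (Nat.lt_succ_of_le hp))
  · rw [tm_tail hMpos h0 (hP p (by omega))]
    exact tm_nonneg _ _ _

lemma bddAbove_tm {M : ℕ → ℝ} (hMpos : ∀ p, 0 < M p)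
    (hMgrow : ∀ C : ℝ, 0 < C → Tendsto (fun p : ℕ => M p / C ^ p) atTop atTop)
    {σ : ℝ} (h0 : 0 ≤ σ) : BddAbove (Set.range (tm M σ)) := by
  obtain ⟨P, hP⟩ := exists_tail hMgrow σ
  obtain ⟨q, -, hq⟩ := exists_argmax hMpos h0 (fun p hp => hP p hp σ h0 le_rfl)
  exact ⟨tm M σ q, Set.forall_mem_range.2 hq⟩

lemma le_assocFn {M : ℕ → ℝ} (hMpos : ∀ p, 0 < M p)
    (hMgrow : ∀ C : ℝ, 0 < C → Tendsto (fun p : ℕ => M p / C ^ p) atTop atTop)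
    {σ : ℝ} (h0 : 0 ≤ σ) (p : ℕ) : tm M σ p ≤ assocFn M σ :=
  le_ciSup (bddAbove_tm hMpos hMgrow h0) p

lemma assocFn_nonneg {M : ℕ → ℝ} (hMpos : ∀ p, 0 < M p)
    (hMgrow : ∀ C : ℝ, 0 < C → Tendsto (fun p : ℕ => M p / C ^ p) atTop atTop)
    {σ : ℝ} (h0 : 0 ≤ σ) : 0 ≤ assocFn M σ :=
  le_trans (tm_nonneg M σ 0) (le_assocFn hMpos hMgrow h0 0)

lemma assocFn_le {M : ℕ → ℝ} {σ a : ℝ} (h : ∀ p, tm M σ p ≤ a) : assocFn M σ ≤ a :=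
  ciSup_le h

lemma assocFn_mono {M : ℕ → ℝ} (hMpos : ∀ p, 0 < M p)
    (hMgrow : ∀ C : ℝ, 0 < C → Tendsto (fun p : ℕ => M p / C ^ p) atTop atTop)
    {σ σ' : ℝ} (h0 : 0 ≤ σ) (h : σ ≤ σ') : assocFn M σ ≤ assocFn M σ' :=
  assocFn_le fun p => le_trans (tm_mono hMpos h0 h p)
    (le_assocFn hMpos hMgrow (h0.trans h) p)

lemma assocFn_eq_tm {M : ℕ → ℝ} (hMpos : ∀ p, 0 < M p)
    (hMgrow : ∀ C : ℝ, 0 < C → Tendsto (fun p : ℕ => M p / C ^ p) atTop atTop)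
    {σ : ℝ} (h0 : 0 ≤ σ) {q : ℕ} (hq : ∀ p, tm M σ p ≤ tm M σ q) :
    assocFn M σ = tm M σ q :=
  le_antisymm (assocFn_le hq) (le_assocFn hMpos hMgrow h0 q)

/-- The gap lemma: for σ large, terms with index ≤ m are at least 1 below the sup. -/
lemma gap_lemma {M : ℕ → ℝ} (hMpos : ∀ p, 0 < M p)
    (hMgrow : ∀ C : ℝ, 0 < C → Tendsto (fun p : ℕ => M p / C ^ p) atTop atTop)
    (m : ℕ) : ∃ s : ℝ, 1 ≤ s ∧ ∀ σ, s ≤ σ → ∀ p ≤ m, tm M σ p + 1 ≤ assocFn M σ := by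
  set D : ℝ := (Finset.range (m + 1)).sup' (by simp) (fun p => max (-Real.log (M p)) 0)
    with hD
  have hD0 : 0 ≤ D := by
    rw [hD]
    exact le_trans (le_max_right (-Real.log (M 0)) 0)
      (Finset.le_sup' (fun p => max (-Real.log (M p)) 0) (Finset.mem_range.2 (Nat.succ_pos m)))
  refine ⟨max (Real.exp (1 + D + Real.log (M (m + 1)))) 1, le_max_right _ _,
    fun σ hσ p hp => ?_⟩
  have hσ1 : (1:ℝ) ≤ σ := le_trans (le_max_right _ _) hσ
  have hσ0 : (0:ℝ) < σ := lt_of_lt_of_le one_pos hσ1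
  have hlogσ : 0 ≤ Real.log σ := Real.log_nonneg hσ1
  have hkey : 1 + D + Real.log (M (m + 1)) ≤ Real.log σ := by
    calc 1 + D + Real.log (M (m + 1)) = Real.log (Real.exp (1 + D + Real.log (M (m + 1)))) :=
          (Real.log_exp _).symm
      _ ≤ Real.log σ := Real.log_le_log (Real.exp_pos _) (le_trans (le_max_left _ _) hσ)
  -- the term at index m+1 is large
  have hbig : (m + 1 : ℝ) * Real.log σ - Real.log (M (m + 1)) ≤ assocFn M σ := by
    have : tm M σ (m + 1) = max ((m + 1 : ℝ) * Real.log σ - Real.log (M (m + 1))) 0 := by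
      rw [tm, Real.log_div (by positivity) (hMpos _).ne', Real.log_pow]
      push_cast
      ring_nf
    calc (m + 1 : ℝ) * Real.log σ - Real.log (M (m + 1)) ≤ tm M σ (m + 1) := by
          rw [this]; exact le_max_left _ _
      _ ≤ assocFn M σ := le_assocFn hMpos hMgrow hσ0.le _
  -- the term at index p is small
  have hsmall : tm M σ p ≤ (m : ℝ) * Real.log σ + D := by
    rw [tm, Real.log_div (by positivity) (hMpos _).ne', Real.log_pow]
    have h1 : (p : ℝ) * Real.log σ - Real.log (M p) ≤ (m : ℝ) * Real.log σ + D := by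
      have : (p : ℝ) * Real.log σ ≤ (m : ℝ) * Real.log σ :=
        mul_le_mul_of_nonneg_right (by exact_mod_cast hp) hlogσ
      have h2 : -Real.log (M p) ≤ D := by
        rw [hD]
        exact le_trans (le_max_left _ 0)
          (Finset.le_sup' (fun p => max (-Real.log (M p)) 0) (Finset.mem_range.2 (by omega)))
      linarith
    exact max_le h1 (by positivity)
  have : (m : ℝ) * Real.log σ + D + 1 ≤ (m + 1 : ℝ) * Real.log σ - Real.log (M (m + 1)) := by
    nlinarith
  linarith

lemma lnplus_mul_le {x t : ℝ} (hx : 0 ≤ x) (ht : 1 ≤ t) :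
    max (Real.log (x * t)) 0 ≤ max (Real.log x) 0 + Real.log t := by
  have hlt : 0 ≤ Real.log t := Real.log_nonneg ht
  rcases eq_or_lt_of_le hx with h | h
  · simp [← h, Real.log_zero]
    linarith
  · rw [Real.log_mul h.ne' (by linarith)]
    have : Real.log x + Real.log t ≤ max (Real.log x) 0 + Real.log t := by
      have := le_max_left (Real.log x) 0; linarith
    exact max_le this (by positivity)

lemma prod_r_lower {r : ℕ → ℝ} (hrpos : ∀ p, 0 < r p)
    (hrtend : Tendsto r atTop atTop) {h : ℝ} (hh : 0 < h) :
    ∃ c : ℝ, 0 < c ∧ c ≤ 1 ∧ ∀ p : ℕ, c * h⁻¹ ^ p ≤ ∏ j ∈ Finset.Icc 1 p, r j := by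
  obtain ⟨J, hJ⟩ := (tendsto_atTop.1 hrtend (1 / h)).exists_forall_of_atTop
  set a : ℕ → ℝ := fun j => min (h * r j) 1 with ha
  have hapos : ∀ j, 0 < a j := fun j => lt_min (mul_pos hh (hrpos j)) one_pos
  have hale : ∀ j, a j ≤ 1 := fun j => min_le_right _ _
  have haone : ∀ j, J ≤ j → a j = 1 := by
    intro j hj
    have : (1:ℝ) ≤ h * r j := by
      have := hJ j hj
      rw [div_le_iff₀ hh] at this
      linarith [this]
    exact min_eq_right this
  set c : ℝ := ∏ j ∈ Finset.Icc 1 J, a j with hc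
  have hcpos : 0 < c := Finset.prod_pos (fun j _ => hapos j)
  have hcle : c ≤ 1 := Finset.prod_le_one (fun j _ => (hapos j).le) (fun j _ => hale j)
  refine ⟨c, hcpos, hcle, fun p => ?_⟩
  have key : c ≤ ∏ j ∈ Finset.Icc 1 p, a j := by
    have hIcc : ∀ n : ℕ, Finset.Icc 1 n = Finset.Ioc 0 n := fun n => rfl
    rcases le_or_gt p J with hpJ | hpJ
    · rw [hc, hIcc, hIcc, ← Finset.prod_Ioc_consecutive _ (Nat.zero_le p) hpJ]
      calc (∏ j ∈ Finset.Ioc 0 p, a j) * ∏ j ∈ Finset.Ioc p J, a j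
          ≤ (∏ j ∈ Finset.Ioc 0 p, a j) * 1 := by
            apply mul_le_mul_of_nonneg_left
              (Finset.prod_le_one (fun j _ => (hapos j).le) (fun j _ => hale j))
              (Finset.prod_nonneg (fun j _ => (hapos j).le))
        _ = ∏ j ∈ Finset.Ioc 0 p, a j := mul_one _
    · rw [hc, hIcc, hIcc, ← Finset.prod_Ioc_consecutive _ (Nat.zero_le J) hpJ.le]
      have h1 : ∏ j ∈ Finset.Ioc J p, a j = 1 :=
        Finset.prod_eq_one (fun j hj => haone j (Finset.mem_Ioc.1 hj).1.le)
      rw [h1, mul_one]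
  calc c * h⁻¹ ^ p ≤ (∏ j ∈ Finset.Icc 1 p, a j) * h⁻¹ ^ p :=
        mul_le_mul_of_nonneg_right key (by positivity)
    _ = ∏ j ∈ Finset.Icc 1 p, (h⁻¹ * a j) := by
        rw [Finset.prod_mul_distrib, Finset.prod_const, Nat.card_Icc]
        simp [mul_comm]
    _ ≤ ∏ j ∈ Finset.Icc 1 p, r j := by
        apply Finset.prod_le_prod (fun j _ => (mul_pos (inv_pos.2 hh) (hapos j)).le)
        intro j _
        calc h⁻¹ * a j ≤ h⁻¹ * (h * r j) := by
              apply mul_le_mul_of_nonneg_left (min_le_left _ _) (by positivity)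
          _ = r j := by field_simp

lemma backward_bound {M : ℕ → ℝ} (hMpos : ∀ p, 0 < M p)
    (hMgrow : ∀ C : ℝ, 0 < C → Tendsto (fun p : ℕ => M p / C ^ p) atTop atTop)
    {r : ℕ → ℝ} (hrpos : ∀ p, 0 < r p) (hrtend : Tendsto r atTop atTop)
    {h : ℝ} (hh : 0 < h) :
    ∃ K : ℝ, 0 ≤ K ∧ ∀ ρ : ℝ, 0 ≤ ρ →
      assocFn (fun p => M p * ∏ j ∈ Finset.Icc 1 p, r j) ρ ≤ assocFn M (h * ρ) + K := by
  obtain ⟨c, hc0, hc1, hcp⟩ := prod_r_lower hrpos hrtend hh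
  have hcinv : 1 ≤ c⁻¹ := (one_le_inv₀ hc0).2 hc1
  refine ⟨Real.log c⁻¹, Real.log_nonneg hcinv, fun ρ hρ => ?_⟩
  apply assocFn_le
  intro p
  have hR : (0:ℝ) < c * h⁻¹ ^ p := by positivity
  have step1 : ρ ^ p / (M p * ∏ j ∈ Finset.Icc 1 p, r j)
      ≤ (h * ρ) ^ p / M p * c⁻¹ := by
    have e1 : ρ ^ p / (M p * (c * h⁻¹ ^ p)) = (h * ρ) ^ p / M p * c⁻¹ := by
      rw [mul_pow]
      field_simp
      rw [mul_assoc (ρ ^ p), ← mul_pow, one_div, inv_mul_cancel₀ hh.ne', one_pow, mul_one]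
    calc ρ ^ p / (M p * ∏ j ∈ Finset.Icc 1 p, r j)
        ≤ ρ ^ p / (M p * (c * h⁻¹ ^ p)) :=
          div_le_div_of_nonneg_left (pow_nonneg hρ p) (mul_pos (hMpos p) hR)
            (mul_le_mul_of_nonneg_left (hcp p) (hMpos p).le)
      _ = (h * ρ) ^ p / M p * c⁻¹ := e1
  calc tm (fun p => M p * ∏ j ∈ Finset.Icc 1 p, r j) ρ p
      ≤ max (Real.log ((h * ρ) ^ p / M p * c⁻¹)) 0 :=
        lnplus_mono (div_nonneg (pow_nonneg hρ p)
          (mul_nonneg (hMpos p).le (le_trans hR.le (hcp p)))) step1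
    _ ≤ max (Real.log ((h * ρ) ^ p / M p)) 0 + Real.log c⁻¹ :=
        lnplus_mul_le (div_nonneg (pow_nonneg (by positivity) p) (hMpos p).le) hcinv
    _ ≤ assocFn M (h * ρ) + Real.log c⁻¹ := by
        have := le_assocFn hMpos hMgrow (by positivity : (0:ℝ) ≤ h * ρ) p
        exact add_le_add_left this _

/-- generic recursion helper -/
def seqRec {α : Type*} (x0 : α) (g : ℕ → α → α) : ℕ → α
  | 0 => x0
  | (k+1) => g k (seqRec x0 g k)

@[simp] lemma seqRec_zero {α : Type*} (x0 : α) (g : ℕ → α → α) : seqRec x0 g 0 = x0 := rfl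
@[simp] lemma seqRec_succ {α : Type*} (x0 : α) (g : ℕ → α → α) (k : ℕ) :
    seqRec x0 g (k+1) = g k (seqRec x0 g k) := rfl

section rconstr

variable (b : ℕ → ℕ)

/-- the step sequence determined by block boundaries `b` -/
noncomputable def rstep (j : ℕ) : ℝ := 1 + ((Finset.range j).filter (fun k => b k < j)).card

lemma rstep_ge_one (j : ℕ) : 1 ≤ rstep b j := by
  have : (0:ℝ) ≤ ((Finset.range j).filter (fun k => b k < j)).card := by positivity
  simp only [rstep]; linarith

lemma rstep_pos (j : ℕ) : 0 < rstep b j := lt_of_lt_of_le one_pos (rstep_ge_one b j)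

lemma rstep_mono : Monotone (rstep b) := by
  intro j j' hj
  have hsub : (Finset.range j).filter (fun k => b k < j) ⊆
      (Finset.range j').filter (fun k => b k < j') := by
    intro x hx
    simp only [Finset.mem_filter, Finset.mem_range] at hx ⊢
    omega
  have := Finset.card_le_card hsub
  simp only [rstep]
  have : ((Finset.range j).filter (fun k => b k < j)).card ≤
      ((Finset.range j').filter (fun k => b k < j')).card := this
  have := Nat.cast_le (α := ℝ).2 this
  linarith

lemma rstep_tendsto (hb : StrictMono b) : Tendsto (rstep b) atTop atTop := by
  rw [tendsto_atTop_atTop]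
  intro A
  refine ⟨b ⌈A⌉₊ + 1, fun j hj => ?_⟩
  have hsub : Finset.range (⌈A⌉₊ + 1) ⊆ (Finset.range j).filter (fun k => b k < j) := by
    intro x hx
    simp only [Finset.mem_range] at hx
    have hx' : x ≤ ⌈A⌉₊ := by omega
    have h1 : b x ≤ b ⌈A⌉₊ := hb.monotone hx'
    have h2 : b x < j := by omega
    have h3 : x < j := by
      have hid : x ≤ b x := hb.le_apply
      omega
    simp only [Finset.mem_filter, Finset.mem_range]
    exact ⟨h3, h2⟩
  have hcard := Finset.card_le_card hsub
  rw [Finset.card_range] at hcard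
  have : ((⌈A⌉₊:ℝ) + 1) ≤ ((Finset.range j).filter (fun k => b k < j)).card := by
    exact_mod_cast hcard
  have hA : A ≤ ⌈A⌉₊ := Nat.le_ceil A
  simp only [rstep]
  linarith

lemma rstep_block_le (hb : StrictMono b) {k j : ℕ} (hj : j ≤ b k) :
    rstep b j ≤ (k : ℝ) + 1 := by
  have hsub : (Finset.range j).filter (fun x => b x < j) ⊆ Finset.range k := by
    intro x hx
    simp only [Finset.mem_filter, Finset.mem_range] at hx ⊢
    have : b x < b k := by omega
    exact hb.lt_iff_lt.1 this
  have hcard := Finset.card_le_card hsub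
  rw [Finset.card_range] at hcard
  have : (((Finset.range j).filter (fun x => b x < j)).card : ℝ) ≤ k := by exact_mod_cast hcard
  simp only [rstep]
  linarith

lemma rstep_prod_le (hb : StrictMono b) {k p : ℕ} (hp : p ≤ b k) :
    ∏ j ∈ Finset.Icc 1 p, rstep b j ≤ ((k : ℝ) + 1) ^ p := by
  calc ∏ j ∈ Finset.Icc 1 p, rstep b j ≤ ∏ j ∈ Finset.Icc 1 p, ((k : ℝ) + 1) := by
        apply Finset.prod_le_prod (fun j _ => (rstep_pos b j).le)
        intro j hj
        exact rstep_block_le b hb (le_trans (Finset.mem_Icc.1 hj).2 hp)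
    _ = ((k : ℝ) + 1) ^ p := by
        rw [Finset.prod_const, Nat.card_Icc]
        simp

lemma rstep_prod_ge_one (p : ℕ) : 1 ≤ ∏ j ∈ Finset.Icc 1 p, rstep b j := by
  calc (1:ℝ) = ∏ _j ∈ Finset.Icc 1 p, (1:ℝ) := by simp
    _ ≤ ∏ j ∈ Finset.Icc 1 p, rstep b j :=
      Finset.prod_le_prod (fun _ _ => zero_le_one) (fun j _ => rstep_ge_one b j)

end rconstr

lemma forward_bound {M : ℕ → ℝ} (hMpos : ∀ p, 0 < M p) (hM0 : M 0 = 1)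
    (hMgrow : ∀ C : ℝ, 0 < C → Tendsto (fun p : ℕ => M p / C ^ p) atTop atTop)
    {ι : Type*} (F : ι → ℝ) (n : ι → ℝ) (hn : ∀ i, 0 ≤ n i)
    (H : ∀ h : ℝ, 0 < h → ∃ C : ℝ, 0 < C ∧ ∀ i, F i ≤ C * Real.exp (assocFn M (h * n i))) :
    ∃ r : ℕ → ℝ, (∀ p, 0 < r p) ∧ Monotone r ∧ Tendsto r atTop atTop ∧
      ∃ C : ℝ, 0 < C ∧ ∀ i, F i ≤
        C * Real.exp (assocFn (fun p => M p * ∏ j ∈ Finset.Icc 1 p, r j) (n i)) := by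
  -- Step 1: constants for the scales 1/(2(k+1))
  have H2 : ∀ k : ℕ, ∃ C : ℝ, 0 < C ∧ ∀ i,
      F i ≤ C * Real.exp (assocFn M (n i / (2 * ((k:ℝ) + 1)))) := by
    intro k
    obtain ⟨C, hC, hb⟩ := H (1 / (2 * ((k:ℝ) + 1))) (by positivity)
    refine ⟨C, hC, fun i => ?_⟩
    have he : (1 / (2 * ((k:ℝ) + 1))) * n i = n i / (2 * ((k:ℝ) + 1)) := by ring
    rw [← he]
    exact hb i
  choose Cf hCfpos hCf using H2
  -- Step 2: the exponents m k
  set c : ℕ → ℝ := fun k => max (Real.log (Cf k)) 0 with hcdef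
  have hc0 : ∀ k, 0 ≤ c k := fun k => le_max_right _ _
  set m : ℕ → ℕ := fun k => ⌈c k / Real.log 2⌉₊ with hmdef
  have hlog2 : (0:ℝ) < Real.log 2 := Real.log_pos one_lt_two
  have hm : ∀ k, c k ≤ (m k : ℝ) * Real.log 2 := by
    intro k
    have h1 : c k / Real.log 2 ≤ (m k : ℝ) := Nat.le_ceil _
    calc c k = c k / Real.log 2 * Real.log 2 := by field_simp
      _ ≤ (m k : ℝ) * Real.log 2 := mul_le_mul_of_nonneg_right h1 hlog2.le
  -- Step 3: gap thresholds
  choose s hs1 hsgap using fun k => gap_lemma hMpos hMgrow (m k)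
  -- Step 4: the radii ρ
  set ρ : ℕ → ℝ := seqRec (max (2 * s 0) 1)
    (fun k ih => max (ih + 1) (2 * ((k:ℝ) + 2) * s (k + 1))) with hρdef
  have hρs : ∀ k : ℕ, 2 * ((k:ℝ) + 1) * s k ≤ ρ k := by
    intro k
    cases k with
    | zero =>
      simp only [hρdef, seqRec_zero, Nat.cast_zero]
      calc 2 * ((0:ℝ) + 1) * s 0 = 2 * s 0 := by ring
        _ ≤ max (2 * s 0) 1 := le_max_left _ _
    | succ k =>
      simp only [hρdef, seqRec_succ]
      have : 2 * (((k:ℕ):ℝ) + 2) * s (k + 1) = 2 * ((((k+1):ℕ):ℝ) + 1) * s (k + 1) := by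
        push_cast; ring
      rw [← this]
      exact le_max_right _ _
  have hρsucc : ∀ k, ρ k + 1 ≤ ρ (k + 1) := by
    intro k
    simp only [hρdef, seqRec_succ]
    exact le_max_left _ _
  have hρ1 : (1:ℝ) ≤ ρ 0 := by
    simp only [hρdef, seqRec_zero]
    exact le_max_right _ _
  have hρge : ∀ k, ρ 0 + k ≤ ρ k := by
    intro k
    induction k with
    | zero => simp
    | succ k ih =>
      have := hρsucc k
      push_cast
      push_cast at ih
      linarith
  -- Step 5: attainment bounds P and block boundaries b
  choose P hP using fun k => exists_tail hMgrow (ρ (k + 1))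
  set b : ℕ → ℕ := seqRec (P 0) (fun k ih => max (ih + 1) (P (k + 1))) with hbdef
  have hbP : ∀ k, P k ≤ b k := by
    intro k
    cases k with
    | zero => simp [hbdef]
    | succ k => simp only [hbdef, seqRec_succ]; exact le_max_right _ _
  have hbmono : StrictMono b := by
    apply strictMono_nat_of_lt_succ
    intro k
    simp only [hbdef, seqRec_succ]
    exact lt_of_lt_of_le (Nat.lt_succ_self _) (le_max_left _ _)
  -- Step 6: the sequence r
  refine ⟨rstep b, rstep_pos b, rstep_mono b, rstep_tendsto b hbmono, ?_⟩
  set M' : ℕ → ℝ := fun p => M p * ∏ j ∈ Finset.Icc 1 p, rstep b j with hM'def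
  have hM'ge : ∀ p, M p ≤ M' p := by
    intro p
    simp only [hM'def]
    nlinarith [rstep_prod_ge_one b p, hMpos p]
  have hM'pos : ∀ p, 0 < M' p := fun p => lt_of_lt_of_le (hMpos p) (hM'ge p)
  refine ⟨max (Cf 0 * Real.exp (assocFn M (ρ 0))) 1,
    lt_of_lt_of_le one_pos (le_max_right _ _), fun i => ?_⟩
  have hbdd' : BddAbove (Set.range (tm M' (n i))) := by
    obtain ⟨u, hu⟩ := bddAbove_tm hMpos hMgrow (hn i)
    refine ⟨u, Set.forall_mem_range.2 fun p => ?_⟩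
    exact le_trans (tm_le_tm hMpos hM'ge (hn i) p) (hu (Set.mem_range_self p))
  have hN0 : 0 ≤ assocFn M' (n i) :=
    le_trans (tm_nonneg M' (n i) 0) (le_ciSup hbdd' 0)
  have hexpN : (1:ℝ) ≤ Real.exp (assocFn M' (n i)) := by
    rw [← Real.exp_zero]
    exact Real.exp_le_exp.2 hN0
  rcases lt_or_ge (n i) (ρ 0) with hcase | hcase
  · -- small n i
    have h1 := hCf 0 i
    simp only [Nat.cast_zero] at h1
    have h2 : assocFn M (n i / (2 * ((0:ℝ) + 1))) ≤ assocFn M (ρ 0) := by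
      apply assocFn_mono hMpos hMgrow (div_nonneg (hn i) (by norm_num))
      have := hn i
      calc n i / (2 * ((0:ℝ) + 1)) = n i / 2 := by norm_num
        _ ≤ n i := by linarith
        _ ≤ ρ 0 := hcase.le
    calc F i ≤ Cf 0 * Real.exp (assocFn M (ρ 0)) :=
          le_trans h1 (mul_le_mul_of_nonneg_left (Real.exp_le_exp.2 h2) (hCfpos 0).le)
      _ = Cf 0 * Real.exp (assocFn M (ρ 0)) * 1 := (mul_one _).symm
      _ ≤ max (Cf 0 * Real.exp (assocFn M (ρ 0))) 1 * Real.exp (assocFn M' (n i)) := by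
          apply mul_le_mul (le_max_left _ _) hexpN zero_le_one
          exact le_trans (mul_nonneg (hCfpos 0).le (Real.exp_pos _).le) (le_max_left _ _)
  · -- large n i : find the maximal k with ρ k ≤ n i
    have hexmax : ∃ k, ρ k ≤ n i ∧ n i < ρ (k + 1) := by
      by_contra hcon
      push_neg at hcon
      have hall : ∀ k, ρ k ≤ n i := by
        intro k
        induction k with
        | zero => exact hcase
        | succ k ih => exact hcon k ih
      obtain ⟨N, hN⟩ := exists_nat_gt (n i - ρ 0)
      have := hρge N
      have := hall N
      linarith
    obtain ⟨k, hk1, hk2⟩ := hexmax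
    have hd2 : (0:ℝ) < 2 * ((k:ℝ) + 1) := by positivity
    set σ : ℝ := n i / (2 * ((k:ℝ) + 1)) with hσdef
    have hσs : s k ≤ σ := by
      rw [hσdef, le_div_iff₀ hd2]
      calc s k * (2 * ((k:ℝ) + 1)) = 2 * ((k:ℝ) + 1) * s k := by ring
        _ ≤ ρ k := hρs k
        _ ≤ n i := hk1
    have hσ1 : (1:ℝ) ≤ σ := le_trans (hs1 k) hσs
    have hσ0 : (0:ℝ) ≤ σ := by linarith
    have hσle : σ ≤ ρ (k + 1) := by
      calc σ ≤ n i := by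
            rw [hσdef]
            apply div_le_self (hn i)
            linarith [Nat.cast_nonneg (α := ℝ) k]
        _ ≤ ρ (k + 1) := hk2.le
    obtain ⟨q, hqP, hqmax⟩ := exists_argmax hMpos hσ0 (fun p hp => hP k p hp σ hσ0 hσle)
    have hAeq : assocFn M σ = tm M σ q := assocFn_eq_tm hMpos hMgrow hσ0 hqmax
    have hqm : m k < q := by
      by_contra hq
      push_neg at hq
      have := hsgap k σ hσs q hq
      rw [← hAeq] at this
      linarith
    have hA1 : (1:ℝ) ≤ assocFn M σ := by
      have := hsgap k σ hσs 0 (Nat.zero_le _)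
      have h0 : tm M σ 0 = 0 := by simp [tm, hM0]
      linarith
    have hlog0 : 0 ≤ Real.log (σ ^ q / M q) := by
      by_contra hneg
      push_neg at hneg
      have : tm M σ q = 0 := max_eq_right hneg.le
      rw [this] at hAeq
      linarith
    have hlogq : tm M σ q = Real.log (σ ^ q / M q) := max_eq_left hlog0
    -- the key lower bound on the new associated function
    have hqb : q ≤ b k := le_trans hqP (hbP k)
    have hRq : ∏ j ∈ Finset.Icc 1 q, rstep b j ≤ ((k:ℝ) + 1) ^ q := rstep_prod_le b hbmono hqb
    have hRpos : (0:ℝ) < ∏ j ∈ Finset.Icc 1 q, rstep b j :=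
      lt_of_lt_of_le one_pos (rstep_prod_ge_one b q)
    have hni : n i = 2 * ((k:ℝ) + 1) * σ := by
      rw [hσdef]
      field_simp
    have hσpos : (0:ℝ) < σ := lt_of_lt_of_le one_pos hσ1
    have hstep : 2 ^ q * (σ ^ q / M q) ≤ n i ^ q / (M q * ∏ j ∈ Finset.Icc 1 q, rstep b j) := by
      have hne : (((k:ℝ) + 1)) ^ q ≠ 0 := by positivity
      have hpow : n i ^ q = 2 ^ q * ((k:ℝ) + 1) ^ q * σ ^ q := by
        rw [hni, mul_pow, mul_pow]
      have he : 2 ^ q * (σ ^ q / M q) = n i ^ q / (M q * ((k:ℝ) + 1) ^ q) := by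
        calc 2 ^ q * (σ ^ q / M q) = 2 ^ q * σ ^ q / M q := (mul_div_assoc _ _ _).symm
          _ = ((k:ℝ) + 1) ^ q * (2 ^ q * σ ^ q) / (((k:ℝ) + 1) ^ q * M q) :=
            (mul_div_mul_left _ _ hne).symm
          _ = n i ^ q / (M q * ((k:ℝ) + 1) ^ q) := by rw [hpow]; ring
      rw [he]
      apply div_le_div_of_nonneg_left (pow_nonneg (hn i) q) (mul_pos (hMpos q) hRpos)
      exact mul_le_mul_of_nonneg_left hRq (hMpos q).le
    have hkey : c k + assocFn M σ ≤ assocFn M' (n i) := by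
      have h1 : Real.log (2 ^ q * (σ ^ q / M q)) ≤ Real.log (n i ^ q / (M q * ∏ j ∈ Finset.Icc 1 q, rstep b j)) := by
        exact Real.log_le_log (mul_pos (pow_pos two_pos q) (div_pos (pow_pos hσpos q) (hMpos q))) hstep
      have h2 : Real.log (2 ^ q * (σ ^ q / M q)) = (q:ℝ) * Real.log 2 + Real.log (σ ^ q / M q) := by
        rw [Real.log_mul (by positivity) (div_pos (pow_pos hσpos q) (hMpos q)).ne', Real.log_pow]
      have h3 : c k ≤ (q:ℝ) * Real.log 2 := by
        calc c k ≤ (m k : ℝ) * Real.log 2 := hm k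
          _ ≤ (q:ℝ) * Real.log 2 := by
            apply mul_le_mul_of_nonneg_right _ hlog2.le
            exact_mod_cast hqm.le
      calc c k + assocFn M σ ≤ (q:ℝ) * Real.log 2 + Real.log (σ ^ q / M q) := by
            rw [hAeq, hlogq]; linarith
        _ = Real.log (2 ^ q * (σ ^ q / M q)) := h2.symm
        _ ≤ Real.log (n i ^ q / (M q * ∏ j ∈ Finset.Icc 1 q, rstep b j)) := h1
        _ ≤ tm M' (n i) q := le_max_left _ _
        _ ≤ assocFn M' (n i) := le_ciSup hbdd' q
    -- conclude
    have hCfe : Cf k ≤ Real.exp (c k) := by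
      rw [← Real.exp_log (hCfpos k)]
      exact Real.exp_le_exp.2 (le_max_left _ _)
    calc F i ≤ Cf k * Real.exp (assocFn M σ) := hCf k i
      _ ≤ Real.exp (c k) * Real.exp (assocFn M σ) :=
          mul_le_mul_of_nonneg_right hCfe (Real.exp_pos _).le
      _ = Real.exp (c k + assocFn M σ) := (Real.exp_add _ _).symm
      _ ≤ Real.exp (assocFn M' (n i)) := Real.exp_le_exp.2 hkey
      _ = 1 * Real.exp (assocFn M' (n i)) := (one_mul _).symm
      _ ≤ max (Cf 0 * Real.exp (assocFn M (ρ 0))) 1 * Real.exp (assocFn M' (n i)) :=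
          mul_le_mul_of_nonneg_right (le_max_right _ _) (Real.exp_pos _).le

/-- For `M_p` positive, `M_0 = 1`, log-convex, with `M_p/C^p → ∞` for every
`C > 0`, and a family `B` of continuous functions on `ℝ^d`, the following are equivalent:
(i) for every `h > 0` there is `C > 0` with `|f(x)| ≤ C e^{M(h|x|)}` for all `x` and
`f ∈ B`; (ii) there are a positive sequence `(r_p)` increasing monotonically to infinity
and `C > 0` with `|f(x)| ≤ C e^{N_{r_p}(|x|)}` for all `x` and `f ∈ B`, where
`N_{r_p}(ρ) = sup_p ln₊(ρ^p / (M_p ∏_{j=1}^p r_j))`. -/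
theorem stmt10 (d : ℕ) (M : ℕ → ℝ) (hMpos : ∀ p, 0 < M p) (hM0 : M 0 = 1)
    (hM1 : ∀ p : ℕ, 1 ≤ p → (M p) ^ 2 ≤ M (p - 1) * M (p + 1))
    (hMgrow : ∀ C : ℝ, 0 < C → Tendsto (fun p : ℕ => M p / C ^ p) atTop atTop)
    (B : Set (EuclideanSpace ℝ (Fin d) → ℂ)) (hB : ∀ f ∈ B, Continuous f) :
    (∀ h : ℝ, 0 < h → ∃ C : ℝ, 0 < C ∧ ∀ f ∈ B, ∀ x,
        ‖f x‖ ≤ C * Real.exp (assocFn M (h * ‖x‖))) ↔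
      (∃ r : ℕ → ℝ, (∀ p, 0 < r p) ∧ Monotone r ∧ Tendsto r atTop atTop ∧
        ∃ C : ℝ, 0 < C ∧ ∀ f ∈ B, ∀ x,
          ‖f x‖ ≤
            C * Real.exp (assocFn (fun p => M p * ∏ j ∈ Finset.Icc 1 p, r j) ‖x‖)) := by
  constructor
  · intro H
    obtain ⟨r, hr1, hr2, hr3, C, hC, hCb⟩ :=
      forward_bound hMpos hM0 hMgrow
        (ι := {f : EuclideanSpace ℝ (Fin d) → ℂ // f ∈ B} × EuclideanSpace ℝ (Fin d))
        (fun i => ‖i.1.1 i.2‖) (fun i => ‖i.2‖)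
        (fun i => norm_nonneg _)
        (by
          intro h hh
          obtain ⟨C, hC, hCb⟩ := H h hh
          exact ⟨C, hC, fun i => hCb i.1.1 i.1.2 i.2⟩)
    exact ⟨r, hr1, hr2, hr3, C, hC, fun f hf x => hCb (⟨f, hf⟩, x)⟩
  · rintro ⟨r, hr1, hr2, hr3, C, hC, hCb⟩
    intro h hh
    obtain ⟨K, hK0, hK⟩ := backward_bound hMpos hMgrow hr1 hr3 hh
    refine ⟨C * Real.exp K, by positivity, fun f hf x => ?_⟩
    calc ‖f x‖
        ≤ C * Real.exp (assocFn (fun p => M p * ∏ j ∈ Finset.Icc 1 p, r j) ‖x‖) :=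
          hCb f hf x
      _ ≤ C * Real.exp (assocFn M (h * ‖x‖) + K) := by
          apply mul_le_mul_of_nonneg_left (Real.exp_le_exp.2 (hK ‖x‖ (norm_nonneg _))) hC.le
      _ = C * Real.exp K * Real.exp (assocFn M (h * ‖x‖)) := by
          rw [Real.exp_add]; ring
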